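/- Let K : [0,1] × [0,1] → ℝ be a continuous Markov transition density: K ≥ 0 and ∫₀¹ K(x,y) dy = 1 for all x. Suppose there is δ > 0 with K(x,y) ≥ δ for all x,y. Define the iterated kernels K₁ = K and K_{n+1}(x,y) = ∫₀¹ K_n(x,z) K(z,y) dz. Then for all x, x' ∈ [0,1] and all y, |K_n(x,y) − K_n(x',y)| ≤ M(1 − δ)^{n−1}, where M = sup K − inf K; in particular K_n(x,y) − K_n(x',y) → 0 uniformly as n → ∞. -/

import Mathlib

open MeasureTheory

/-- Iterated kernels: `iterK K n` is the `(n+1)`-st iterated kernel `K_{n+1}`,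
so `iterK K 0 = K₁ = K` and `K_{n+2}(x,y) = ∫₀¹ K_{n+1}(x,z) K(z,y) dz`. -/
noncomputable def iterK (K : ℝ → ℝ → ℝ) : ℕ → ℝ → ℝ → ℝ
  | 0 => K
  | n + 1 => fun x y => ∫ z in (0:ℝ)..1, iterK K n x z * K z y

section Aux

variable {K : ℝ → ℝ → ℝ}

lemma iterK_cont (hK : Continuous fun p : ℝ × ℝ => K p.1 p.2) :
    ∀ n, Continuous fun p : ℝ × ℝ => iterK K n p.1 p.2 := by
  intro n
  induction n with
  | zero => exact hK
  | succ n ih =>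
    show Continuous fun p : ℝ × ℝ => ∫ z in (0:ℝ)..1, iterK K n p.1 z * K z p.2
    apply intervalIntegral.continuous_parametric_intervalIntegral_of_continuous'
    exact (ih.comp (by fun_prop : Continuous fun q : (ℝ × ℝ) × ℝ => (q.1.1, q.2))).mul
      (hK.comp (by fun_prop : Continuous fun q : (ℝ × ℝ) × ℝ => (q.2, q.1.2)))

/-- Fubini for continuous integrands on `[0,1]²`. -/
lemma swap_aux (F : ℝ → ℝ → ℝ) (hF : Continuous fun p : ℝ × ℝ => F p.1 p.2) :
    (∫ y in (0:ℝ)..1, ∫ z in (0:ℝ)..1, F y z) = ∫ z in (0:ℝ)..1, ∫ y in (0:ℝ)..1, F y z := by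
  have h01 : (0:ℝ) ≤ 1 := zero_le_one
  have hint : Integrable (Function.uncurry F)
      ((volume.restrict (Set.Ioc (0:ℝ) 1)).prod (volume.restrict (Set.Ioc (0:ℝ) 1))) := by
    rw [Measure.prod_restrict, ← Measure.volume_eq_prod]
    have : IntegrableOn (Function.uncurry F) (Set.Icc (0:ℝ) 1 ×ˢ Set.Icc (0:ℝ) 1) volume :=
      hF.continuousOn.integrableOn_compact (isCompact_Icc.prod isCompact_Icc)
    exact this.mono_set (Set.prod_mono Set.Ioc_subset_Icc_self Set.Ioc_subset_Icc_self)
  rw [intervalIntegral.integral_of_le h01, intervalIntegral.integral_of_le h01]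
  simp_rw [intervalIntegral.integral_of_le h01]
  exact MeasureTheory.integral_integral_swap hint

lemma iterK_rowsum (hK : Continuous fun p : ℝ × ℝ => K p.1 p.2)
    (hrow : ∀ x ∈ Set.Icc (0:ℝ) 1, ∫ y in (0:ℝ)..1, K x y = 1) :
    ∀ n, ∀ x ∈ Set.Icc (0:ℝ) 1, ∫ y in (0:ℝ)..1, iterK K n x y = 1 := by
  intro n
  induction n with
  | zero => exact hrow
  | succ n ih =>
    intro x hx
    show (∫ y in (0:ℝ)..1, ∫ z in (0:ℝ)..1, iterK K n x z * K z y) = 1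
    rw [swap_aux (fun y z => iterK K n x z * K z y)
      (((iterK_cont hK n).comp (by fun_prop : Continuous fun p : ℝ × ℝ => (x, p.2))).mul
        (hK.comp (by fun_prop : Continuous fun p : ℝ × ℝ => (p.2, p.1))))]
    have hcongr : Set.EqOn (fun z => ∫ y in (0:ℝ)..1, iterK K n x z * K z y)
        (fun z => iterK K n x z) (Set.uIcc (0:ℝ) 1) := by
      intro z hz
      rw [Set.uIcc_of_le zero_le_one] at hz
      simp only
      rw [intervalIntegral.integral_const_mul, hrow z hz, mul_one]
    rw [intervalIntegral.integral_congr hcongr, ih x hx]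

lemma delta_le_one {δ : ℝ} (hK : Continuous fun p : ℝ × ℝ => K p.1 p.2)
    (hpos : ∀ x ∈ Set.Icc (0:ℝ) 1, ∀ y ∈ Set.Icc (0:ℝ) 1, δ ≤ K x y)
    (hrow : ∀ x ∈ Set.Icc (0:ℝ) 1, ∫ y in (0:ℝ)..1, K x y = 1) : δ ≤ 1 := by
  have h0 : (0:ℝ) ∈ Set.Icc (0:ℝ) 1 := by constructor <;> norm_num
  have hc : Continuous fun y => K 0 y := hK.comp (by fun_prop : Continuous fun y : ℝ => ((0:ℝ), y))
  calc δ = ∫ _ in (0:ℝ)..1, δ := by simp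
    _ ≤ ∫ y in (0:ℝ)..1, K 0 y := by
        apply intervalIntegral.integral_mono_on zero_le_one intervalIntegrable_const
          (hc.intervalIntegrable 0 1)
        exact fun y hy => hpos 0 h0 y hy
    _ = 1 := hrow 0 h0

lemma iterK_L1 {δ : ℝ} (hK : Continuous fun p : ℝ × ℝ => K p.1 p.2) (hδ : 0 < δ)
    (hpos : ∀ x ∈ Set.Icc (0:ℝ) 1, ∀ y ∈ Set.Icc (0:ℝ) 1, δ ≤ K x y)
    (hrow : ∀ x ∈ Set.Icc (0:ℝ) 1, ∫ y in (0:ℝ)..1, K x y = 1) :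
    ∀ n, ∀ x ∈ Set.Icc (0:ℝ) 1, ∀ x' ∈ Set.Icc (0:ℝ) 1,
      (∫ z in (0:ℝ)..1, |iterK K n x z - iterK K n x' z|) ≤ 2 * (1 - δ) ^ (n + 1) := by
  have h1δ : (0:ℝ) ≤ 1 - δ := by linarith [delta_le_one hK hpos hrow]
  have slice : ∀ n (x : ℝ), Continuous fun z => iterK K n x z := fun n x =>
    (iterK_cont hK n).comp (by fun_prop : Continuous fun z : ℝ => (x, z))
  have sliceK : ∀ y : ℝ, Continuous fun z => K z y := fun y =>
    hK.comp (by fun_prop : Continuous fun z : ℝ => (z, y))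
  have sliceK' : ∀ z : ℝ, Continuous fun y => K z y := fun z =>
    hK.comp (by fun_prop : Continuous fun y : ℝ => (z, y))
  intro n
  induction n with
  | zero =>
    intro x hx x' hx'
    show (∫ z in (0:ℝ)..1, |K x z - K x' z|) ≤ 2 * (1 - δ) ^ (0 + 1)
    have hpt : ∀ z ∈ Set.Icc (0:ℝ) 1, |K x z - K x' z| ≤ (K x z - δ) + (K x' z - δ) := by
      intro z hz
      have h1 := hpos x hx z hz
      have h2 := hpos x' hx' z hz
      rw [abs_sub_le_iff]
      constructor <;> linarith
    calc (∫ z in (0:ℝ)..1, |K x z - K x' z|)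
        ≤ ∫ z in (0:ℝ)..1, ((K x z - δ) + (K x' z - δ)) := by
          apply intervalIntegral.integral_mono_on zero_le_one
            (((sliceK' x).sub (sliceK' x')).abs.intervalIntegrable 0 1)
            ((((sliceK' x).sub continuous_const).add
              ((sliceK' x').sub continuous_const)).intervalIntegrable 0 1)
          exact hpt
      _ = (∫ z in (0:ℝ)..1, K x z) + (∫ z in (0:ℝ)..1, K x' z) - 2 * δ := by
          rw [intervalIntegral.integral_add (f := fun z => K x z - δ) (g := fun z => K x' z - δ)
            (((sliceK' x).sub continuous_const).intervalIntegrable 0 1)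
            (((sliceK' x').sub continuous_const).intervalIntegrable 0 1),
            intervalIntegral.integral_sub ((sliceK' x).intervalIntegrable 0 1)
              intervalIntegrable_const,
            intervalIntegral.integral_sub ((sliceK' x').intervalIntegrable 0 1)
              intervalIntegrable_const]
          simp; ring
      _ = 2 * (1 - δ) ^ (0 + 1) := by rw [hrow x hx, hrow x' hx']; ring
  | succ n ih =>
    intro x hx x' hx'
    set D : ℝ → ℝ := fun z => iterK K n x z - iterK K n x' z with hD
    have hDc : Continuous D := (slice n x).sub (slice n x')
    have hDint0 : (∫ z in (0:ℝ)..1, D z) = 0 := by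
      rw [hD]
      rw [intervalIntegral.integral_sub ((slice n x).intervalIntegrable 0 1)
        ((slice n x').intervalIntegrable 0 1), iterK_rowsum hK hrow n x hx,
        iterK_rowsum hK hrow n x' hx', sub_self]
    have key : ∀ y : ℝ, iterK K (n + 1) x y - iterK K (n + 1) x' y
        = ∫ z in (0:ℝ)..1, D z * (K z y - δ) := by
      intro y
      have e1 : (∫ z in (0:ℝ)..1, D z * (K z y - δ))
          = (∫ z in (0:ℝ)..1, D z * K z y) - (∫ z in (0:ℝ)..1, D z) * δ := by
        simp_rw [mul_sub]
        rw [intervalIntegral.integral_sub (f := fun z => D z * K z y) (g := fun z => D z * δ)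
          (((hDc).mul (sliceK y)).intervalIntegrable 0 1)
          ((hDc.mul continuous_const).intervalIntegrable 0 1),
          intervalIntegral.integral_mul_const]
      rw [e1, hDint0, zero_mul, sub_zero]
      show iterK K (n + 1) x y - iterK K (n + 1) x' y
        = ∫ z in (0:ℝ)..1, (iterK K n x z - iterK K n x' z) * K z y
      simp_rw [sub_mul]
      rw [intervalIntegral.integral_sub (f := fun z => iterK K n x z * K z y)
        (g := fun z => iterK K n x' z * K z y)
        (((slice n x).mul (sliceK y)).intervalIntegrable 0 1)
        (((slice n x').mul (sliceK y)).intervalIntegrable 0 1)]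
      rfl
    have hpt : ∀ y ∈ Set.Icc (0:ℝ) 1,
        |iterK K (n + 1) x y - iterK K (n + 1) x' y|
          ≤ ∫ z in (0:ℝ)..1, |D z| * (K z y - δ) := by
      intro y hy
      rw [key y]
      refine le_trans (intervalIntegral.abs_integral_le_integral_abs zero_le_one) ?_
      apply intervalIntegral.integral_mono_on zero_le_one
        ((hDc.mul ((sliceK y).sub continuous_const)).abs.intervalIntegrable 0 1)
        ((hDc.abs.mul ((sliceK y).sub continuous_const)).intervalIntegrable 0 1)
      intro z hz
      show |D z * (K z y - δ)| ≤ |D z| * (K z y - δ)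
      rw [abs_mul, abs_of_nonneg (sub_nonneg.2 (hpos z hz y hy))]
    have hcontinner : Continuous fun y : ℝ => ∫ z in (0:ℝ)..1, |D z| * (K z y - δ) := by
      apply intervalIntegral.continuous_parametric_intervalIntegral_of_continuous'
      exact ((hDc.abs.comp (by fun_prop : Continuous fun q : ℝ × ℝ => q.2)).mul
        ((hK.comp (by fun_prop : Continuous fun q : ℝ × ℝ => (q.2, q.1))).sub continuous_const))
    calc (∫ y in (0:ℝ)..1, |iterK K (n + 1) x y - iterK K (n + 1) x' y|)
        ≤ ∫ y in (0:ℝ)..1, ∫ z in (0:ℝ)..1, |D z| * (K z y - δ) := by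
          apply intervalIntegral.integral_mono_on zero_le_one
            (((((slice (n+1) x)).sub (slice (n+1) x')).abs).intervalIntegrable 0 1)
            (hcontinner.intervalIntegrable 0 1)
          exact hpt
      _ = ∫ z in (0:ℝ)..1, ∫ y in (0:ℝ)..1, |D z| * (K z y - δ) := by
          apply swap_aux
          exact ((hDc.abs.comp (by fun_prop : Continuous fun q : ℝ × ℝ => q.2)).mul
            ((hK.comp (by fun_prop : Continuous fun q : ℝ × ℝ => (q.2, q.1))).sub continuous_const))
      _ = ∫ z in (0:ℝ)..1, |D z| * (1 - δ) := by
          apply intervalIntegral.integral_congr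
          intro z hz
          rw [Set.uIcc_of_le zero_le_one] at hz
          simp only
          rw [intervalIntegral.integral_const_mul]
          congr 1
          rw [intervalIntegral.integral_sub ((sliceK' z).intervalIntegrable 0 1)
            intervalIntegrable_const, hrow z hz]
          simp
      _ = (∫ z in (0:ℝ)..1, |D z|) * (1 - δ) := intervalIntegral.integral_mul_const _ _
      _ ≤ (2 * (1 - δ) ^ (n + 1)) * (1 - δ) :=
          mul_le_mul_of_nonneg_right (ih x hx x' hx') h1δ
      _ = 2 * (1 - δ) ^ (n + 1 + 1) := by ring

end Aux

theorem hostinsky_kernel_contraction (K : ℝ → ℝ → ℝ) (δ M : ℝ)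
    (hK : Continuous fun p : ℝ × ℝ => K p.1 p.2) (hδ : 0 < δ)
    (hpos : ∀ x ∈ Set.Icc (0:ℝ) 1, ∀ y ∈ Set.Icc (0:ℝ) 1, δ ≤ K x y)
    (hrow : ∀ x ∈ Set.Icc (0:ℝ) 1, ∫ y in (0:ℝ)..1, K x y = 1)
    (hM : M = sSup (Set.image2 K (Set.Icc 0 1) (Set.Icc 0 1)) -
              sInf (Set.image2 K (Set.Icc 0 1) (Set.Icc 0 1))) :
    ∀ n : ℕ, ∀ x ∈ Set.Icc (0:ℝ) 1, ∀ x' ∈ Set.Icc (0:ℝ) 1, ∀ y ∈ Set.Icc (0:ℝ) 1,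
      |iterK K n x y - iterK K n x' y| ≤ M * (1 - δ) ^ n := by
  have hcomp : IsCompact (Set.image2 K (Set.Icc (0:ℝ) 1) (Set.Icc 0 1)) := by
    rw [← Set.image_uncurry_prod]
    exact (isCompact_Icc.prod isCompact_Icc).image hK
  have h00 : (0:ℝ) ∈ Set.Icc (0:ℝ) 1 := by norm_num
  have hbA := hcomp.bddAbove
  have hbB := hcomp.bddBelow
  have hM0 : 0 ≤ M := by
    have h1 : K 0 0 ≤ sSup (Set.image2 K (Set.Icc (0:ℝ) 1) (Set.Icc 0 1)) :=
      le_csSup hbA (Set.mem_image2_of_mem h00 h00)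
    have h2 : sInf (Set.image2 K (Set.Icc (0:ℝ) 1) (Set.Icc 0 1)) ≤ K 0 0 :=
      csInf_le hbB (Set.mem_image2_of_mem h00 h00)
    rw [hM]; linarith
  have slice : ∀ n (x : ℝ), Continuous fun z => iterK K n x z := fun n x =>
    (iterK_cont hK n).comp (by fun_prop : Continuous fun z : ℝ => (x, z))
  have sliceK : ∀ y : ℝ, Continuous fun z => K z y := fun y =>
    hK.comp (by fun_prop : Continuous fun z : ℝ => (z, y))
  intro n
  induction n with
  | zero =>
    intro x hx x' hx' y hy
    simp only [pow_zero, mul_one]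
    show |K x y - K x' y| ≤ M
    have h1 : K x y ≤ sSup (Set.image2 K (Set.Icc (0:ℝ) 1) (Set.Icc 0 1)) :=
      le_csSup hbA (Set.mem_image2_of_mem hx hy)
    have h2 : sInf (Set.image2 K (Set.Icc (0:ℝ) 1) (Set.Icc 0 1)) ≤ K x y :=
      csInf_le hbB (Set.mem_image2_of_mem hx hy)
    have h3 : K x' y ≤ sSup (Set.image2 K (Set.Icc (0:ℝ) 1) (Set.Icc 0 1)) :=
      le_csSup hbA (Set.mem_image2_of_mem hx' hy)
    have h4 : sInf (Set.image2 K (Set.Icc (0:ℝ) 1) (Set.Icc 0 1)) ≤ K x' y :=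
      csInf_le hbB (Set.mem_image2_of_mem hx' hy)
    rw [abs_sub_le_iff, hM]
    constructor <;> linarith
  | succ n _ =>
    intro x hx x' hx' y hy
    set S := (fun z => K z y) '' Set.Icc (0:ℝ) 1 with hS
    have hSsub : S ⊆ Set.image2 K (Set.Icc (0:ℝ) 1) (Set.Icc 0 1) := by
      rintro _ ⟨z, hz, rfl⟩; exact Set.mem_image2_of_mem hz hy
    have hSne : S.Nonempty := ⟨K 0 y, Set.mem_image_of_mem _ h00⟩
    have hSbA : BddAbove S := hbA.mono hSsub
    have hSbB : BddBelow S := hbB.mono hSsub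
    set c := (sSup S + sInf S) / 2 with hc
    have hMhalf : ∀ z ∈ Set.Icc (0:ℝ) 1, |K z y - c| ≤ M / 2 := by
      intro z hz
      have h1 : K z y ≤ sSup S := le_csSup hSbA (Set.mem_image_of_mem _ hz)
      have h2 : sInf S ≤ K z y := csInf_le hSbB (Set.mem_image_of_mem _ hz)
      have h3 : sSup S ≤ sSup (Set.image2 K (Set.Icc (0:ℝ) 1) (Set.Icc 0 1)) :=
        csSup_le_csSup hbA hSne hSsub
      have h4 : sInf (Set.image2 K (Set.Icc (0:ℝ) 1) (Set.Icc 0 1)) ≤ sInf S :=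
        csInf_le_csInf hbB hSne hSsub
      rw [abs_le, hc]
      constructor <;> [rw [hM]; rw [hM]] <;> linarith
    set D : ℝ → ℝ := fun z => iterK K n x z - iterK K n x' z with hD
    have hDc : Continuous D := (slice n x).sub (slice n x')
    have hDint0 : (∫ z in (0:ℝ)..1, D z) = 0 := by
      rw [hD]
      rw [intervalIntegral.integral_sub ((slice n x).intervalIntegrable 0 1)
        ((slice n x').intervalIntegrable 0 1), iterK_rowsum hK hrow n x hx,
        iterK_rowsum hK hrow n x' hx', sub_self]
    have key : iterK K (n + 1) x y - iterK K (n + 1) x' y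
        = ∫ z in (0:ℝ)..1, D z * (K z y - c) := by
      have e1 : (∫ z in (0:ℝ)..1, D z * (K z y - c))
          = (∫ z in (0:ℝ)..1, D z * K z y) - (∫ z in (0:ℝ)..1, D z) * c := by
        simp_rw [mul_sub]
        rw [intervalIntegral.integral_sub (f := fun z => D z * K z y) (g := fun z => D z * c)
          (((hDc).mul (sliceK y)).intervalIntegrable 0 1)
          ((hDc.mul continuous_const).intervalIntegrable 0 1),
          intervalIntegral.integral_mul_const]
      rw [e1, hDint0, zero_mul, sub_zero]
      show iterK K (n + 1) x y - iterK K (n + 1) x' y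
        = ∫ z in (0:ℝ)..1, (iterK K n x z - iterK K n x' z) * K z y
      simp_rw [sub_mul]
      rw [intervalIntegral.integral_sub (f := fun z => iterK K n x z * K z y)
        (g := fun z => iterK K n x' z * K z y)
        (((slice n x).mul (sliceK y)).intervalIntegrable 0 1)
        (((slice n x').mul (sliceK y)).intervalIntegrable 0 1)]
      rfl
    calc |iterK K (n + 1) x y - iterK K (n + 1) x' y|
        = |∫ z in (0:ℝ)..1, D z * (K z y - c)| := by rw [key]
      _ ≤ ∫ z in (0:ℝ)..1, |D z * (K z y - c)| :=
          intervalIntegral.abs_integral_le_integral_abs zero_le_one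
      _ ≤ ∫ z in (0:ℝ)..1, |D z| * (M / 2) := by
          apply intervalIntegral.integral_mono_on zero_le_one
            ((hDc.mul ((sliceK y).sub continuous_const)).abs.intervalIntegrable 0 1)
            ((hDc.abs.mul continuous_const).intervalIntegrable 0 1)
          intro z hz
          show |D z * (K z y - c)| ≤ |D z| * (M / 2)
          rw [abs_mul]
          exact mul_le_mul_of_nonneg_left (hMhalf z hz) (abs_nonneg _)
      _ = (∫ z in (0:ℝ)..1, |D z|) * (M / 2) := intervalIntegral.integral_mul_const _ _
      _ ≤ (2 * (1 - δ) ^ (n + 1)) * (M / 2) :=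
          mul_le_mul_of_nonneg_right (iterK_L1 hK hδ hpos hrow n x hx x' hx')
            (by linarith)
      _ = M * (1 - δ) ^ (n + 1) := by ring
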